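/- Let (S_t, V_t) be a sub-ψ_N process with ψ_N(λ) = λ²/2 and λ_max = ∞ (a sub-Gaussian process in ℝ^d), and let U_0 be a fixed symmetric positive-definite d×d matrix. Then for every δ ∈ (0,1), with probability at least 1−δ, for all t ≥ 1: ‖S_t‖²_{(V_t+U_0)⁻¹} ≤ log(det(V_t+U_0)/det U_0) + 2·log(1/δ). -/

import Mathlib

open MeasureTheory Filter Matrix Real Set
open scoped ENNReal NNReal

noncomputable section
set_option maxHeartbeats 2000000

variable {d : ℕ} {Ω : Type*}

/-- The quadratic form `⟨v, A v⟩`. -/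
def quadForm (A : Matrix (Fin d) (Fin d) ℝ) (v : Fin d → ℝ) : ℝ := v ⬝ᵥ A.mulVec v

/-- The self-normalized norm `‖v‖_A = √⟨v, A v⟩`. -/
def matNorm (A : Matrix (Fin d) (Fin d) ℝ) (v : Fin d → ℝ) : ℝ := Real.sqrt (quadForm A v)

/-- A sub-ψ process in ℝ^d: adapted `S`, adapted positive-definite `V`, and for each unit
vector θ and each λ in the domain `D`, the process `exp(λ⟨θ,S_t⟩ − ψ(λ)⟨θ,V_tθ⟩)` is
dominated by a nonnegative supermartingale starting ≤ 1. -/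
def IsSubPsi [m : MeasurableSpace Ω] (P : Measure Ω) (F : Filtration ℕ m)
    (D : Set ℝ) (ψ : ℝ → ℝ)
    (S : ℕ → Ω → Fin d → ℝ) (V : ℕ → Ω → Matrix (Fin d) (Fin d) ℝ) : Prop :=
  StronglyAdapted F S ∧ StronglyAdapted F V ∧ (∀ t ω, (V t ω).PosDef) ∧
  ∀ θ : Fin d → ℝ, θ ⬝ᵥ θ = 1 → ∀ lam ∈ D, ∃ L : ℕ → Ω → ℝ,
    Supermartingale L F P ∧ (∀ t ω, 0 ≤ L t ω) ∧ (∀ ω, L 0 ω ≤ 1) ∧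
    ∀ t, ∀ᵐ ω ∂P, Real.exp (lam * (θ ⬝ᵥ S t ω) - ψ lam * quadForm (V t ω) θ) ≤ L t ω

/-! ### Auxiliary lemmas -/

instance : MeasurableSpace (Matrix (Fin d) (Fin d) ℝ) :=
  inferInstanceAs (MeasurableSpace ((Fin d) → (Fin d) → ℝ))

instance : BorelSpace (Matrix (Fin d) (Fin d) ℝ) :=
  inferInstanceAs (BorelSpace ((Fin d) → (Fin d) → ℝ))

instance : TopologicalSpace.PseudoMetrizableSpace (Matrix (Fin d) (Fin d) ℝ) :=
  inferInstanceAs (TopologicalSpace.PseudoMetrizableSpace ((Fin d) → (Fin d) → ℝ))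

lemma quadForm_eq (A : Matrix (Fin d) (Fin d) ℝ) (v : Fin d → ℝ) :
    quadForm A v = ∑ i, ∑ j, v i * (A i j * v j) := by
  simp [quadForm, dotProduct, Matrix.mulVec, Finset.mul_sum]

lemma dot_eq (s v : Fin d → ℝ) : s ⬝ᵥ v = ∑ i, s i * v i := rfl

lemma quadForm_nonneg {A : Matrix (Fin d) (Fin d) ℝ} (hA : A.PosSemidef) (v : Fin d → ℝ) :
    0 ≤ quadForm A v := by
  have := hA.dotProduct_mulVec_nonneg v
  simpa [quadForm] using this

lemma continuous_quadForm (A : Matrix (Fin d) (Fin d) ℝ) :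
    Continuous fun x : Fin d → ℝ => quadForm A x := by
  simp only [quadForm_eq]
  exact continuous_finset_sum _ fun i _ => continuous_finset_sum _ fun j _ =>
    ((continuous_apply i).mul (continuous_const.mul (continuous_apply j)))

lemma continuous_dot (s : Fin d → ℝ) : Continuous fun x : Fin d → ℝ => s ⬝ᵥ x := by
  simp only [dot_eq]
  exact continuous_finset_sum _ fun i _ => continuous_const.mul (continuous_apply i)

lemma symm_dot {M : Matrix (Fin d) (Fin d) ℝ} (hM : Mᵀ = M) (u v : Fin d → ℝ) :
    u ⬝ᵥ (M *ᵥ v) = (M *ᵥ u) ⬝ᵥ v := by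
  rw [Matrix.dotProduct_mulVec, ← Matrix.mulVec_transpose, hM]

lemma quadForm_add (A B : Matrix (Fin d) (Fin d) ℝ) (v : Fin d → ℝ) :
    quadForm (A + B) v = quadForm A v + quadForm B v := by
  unfold quadForm
  rw [Matrix.add_mulVec, dotProduct_add]

lemma quadForm_zero (A : Matrix (Fin d) (Fin d) ℝ) : quadForm A 0 = 0 := by
  simp [quadForm]

lemma measurable_quadForm_comp {α : Type*} [MeasurableSpace α]
    {M : α → Matrix (Fin d) (Fin d) ℝ} {v : α → Fin d → ℝ}
    (hM : Measurable M) (hv : Measurable v) :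
    Measurable fun ω => quadForm (M ω) (v ω) := by
  simp only [quadForm_eq]
  exact Finset.measurable_sum _ fun i _ => Finset.measurable_sum _ fun j _ =>
    ((measurable_pi_apply i).comp hv).mul
      ((((measurable_pi_apply j).comp ((measurable_pi_apply i).comp hM))).mul
        ((measurable_pi_apply j).comp hv))

lemma measurable_dot_comp {α : Type*} [MeasurableSpace α]
    {u v : α → Fin d → ℝ} (hu : Measurable u) (hv : Measurable v) :
    Measurable fun ω => u ω ⬝ᵥ v ω := by
  simp only [dot_eq]
  exact Finset.measurable_sum _ fun i _ =>
    ((measurable_pi_apply i).comp hu).mul ((measurable_pi_apply i).comp hv)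

lemma measurable_matrix_inv {α : Type*} [MeasurableSpace α]
    {M : α → Matrix (Fin d) (Fin d) ℝ} (hM : Measurable M) :
    Measurable fun ω => (M ω)⁻¹ := by
  have hdet : Measurable fun ω => (M ω).det :=
    (Continuous.matrix_det continuous_id).measurable.comp hM
  have hadj : Measurable fun ω => (M ω).adjugate :=
    (Continuous.matrix_adjugate continuous_id).measurable.comp hM
  have heq : (fun ω => (M ω)⁻¹) = fun ω => Ring.inverse (M ω).det • (M ω).adjugate := by
    funext ω; rw [Matrix.inv_def]
  rw [heq]
  simp only [Ring.inverse_eq_inv']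
  exact measurable_pi_lambda _ fun i => measurable_pi_lambda _ fun j => by
    simp only [Matrix.smul_apply, smul_eq_mul]
    exact hdet.inv.mul ((measurable_pi_apply j).comp ((measurable_pi_apply i).comp hadj))

/-- Real-number inequality used at the core of the argument. -/
lemma onebound {dA dU δ q : ℝ} (hA : 0 < dA) (hU : 0 < dU) (hδ : 0 < δ)
    (h : Real.log (dA / dU) + 2 * Real.log (1 / δ) < q) :
    1 ≤ δ * (Real.sqrt dU / Real.sqrt dA) * Real.exp (q / 2) := by
  have hsdA : 0 < Real.sqrt dA := Real.sqrt_pos.mpr hA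
  have hsdU : 0 < Real.sqrt dU := Real.sqrt_pos.mpr hU
  have hdiv : (0:ℝ) < dA / dU := div_pos hA hU
  have hsq : Real.sqrt (dA / dU) = Real.sqrt dA / Real.sqrt dU := Real.sqrt_div hA.le dU
  have hx : 0 < Real.sqrt (dA / dU) / δ := by positivity
  have hlog : Real.log (Real.sqrt (dA / dU) / δ) ≤ q / 2 := by
    rw [Real.log_div (ne_of_gt (Real.sqrt_pos.mpr hdiv)) (ne_of_gt hδ),
      Real.log_sqrt hdiv.le]
    have h2 : Real.log (1 / δ) = -Real.log δ := by rw [one_div, Real.log_inv]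
    rw [h2] at h
    linarith
  have hexp : Real.sqrt (dA / dU) / δ ≤ Real.exp (q / 2) := by
    have h3 := Real.exp_le_exp.mpr hlog
    rwa [Real.exp_log hx] at h3
  have hfact : (1:ℝ) = δ * (Real.sqrt dU / Real.sqrt dA) * (Real.sqrt (dA/dU) / δ) := by
    rw [hsq]; field_simp
  rw [hfact]
  exact mul_le_mul_of_nonneg_left hexp (by positivity)

open scoped MatrixOrder in
/-- The multivariate Gaussian integral. -/
lemma gauss_key (B : Matrix (Fin d) (Fin d) ℝ) (hB : B.PosDef) (s : Fin d → ℝ) :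
    Integrable (fun x : Fin d → ℝ => Real.exp (s ⬝ᵥ x - quadForm B x / 2)) volume ∧
    ∫ x : Fin d → ℝ, Real.exp (s ⬝ᵥ x - quadForm B x / 2) =
      Real.sqrt (2 * π) ^ d / Real.sqrt B.det * Real.exp (quadForm B⁻¹ s / 2) := by
  classical
  have hBdet : B.det ≠ 0 := ne_of_gt hB.det_pos
  have hBdetU : IsUnit B.det := isUnit_iff_ne_zero.mpr hBdet
  have hBi : (B⁻¹).PosDef := hB.inv
  set C : Matrix (Fin d) (Fin d) ℝ := CFC.sqrt B⁻¹ with hCdef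
  have hCC : C * C = B⁻¹ := CFC.sqrt_mul_sqrt_self B⁻¹ hBi.posSemidef.nonneg
  have hCsym : Cᵀ = C := by
    have := (CFC.sqrt_nonneg B⁻¹).posSemidef.isHermitian
    simpa [Matrix.IsHermitian, Matrix.conjTranspose_eq_transpose_of_trivial] using this
  have hdetCsq : C.det * C.det = B.det⁻¹ := by
    rw [← Matrix.det_mul, hCC, Matrix.det_nonsing_inv, Ring.inverse_eq_inv']
  have hdetC : C.det ≠ 0 := by
    intro h
    rw [h, mul_zero] at hdetCsq
    exact hBdet (by simpa using (inv_eq_zero.mp hdetCsq.symm))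
  have hdetCU : IsUnit C.det := isUnit_iff_ne_zero.mpr hdetC
  have habsdetC : |C.det| = Real.sqrt B.det⁻¹ := by
    rw [← Real.sqrt_sq_eq_abs, sq, hdetCsq]
  have hBeq : B = (C * C)⁻¹ := by
    rw [hCC, Matrix.nonsing_inv_nonsing_inv _ hBdetU]
  have hCBC : C * B * C = 1 := by
    rw [hBeq, Matrix.mul_inv_rev, ← Matrix.mul_assoc C C⁻¹ C⁻¹,
      Matrix.mul_nonsing_inv _ hdetCU, Matrix.one_mul, Matrix.nonsing_inv_mul _ hdetCU]
  set mv : Fin d → ℝ := B⁻¹ *ᵥ s with hmv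
  have hBm : B *ᵥ mv = s := by
    rw [hmv, Matrix.mulVec_mulVec, Matrix.mul_nonsing_inv _ hBdetU, Matrix.one_mulVec]
  have hBsym : Bᵀ = B := by
    have := hB.isHermitian
    simpa [Matrix.IsHermitian, Matrix.conjTranspose_eq_transpose_of_trivial] using this
  -- key algebraic identity
  have key : ∀ z : Fin d → ℝ,
      s ⬝ᵥ (C *ᵥ z + mv) - quadForm B (C *ᵥ z + mv) / 2
        = quadForm B⁻¹ s / 2 - z ⬝ᵥ z / 2 := by
    intro z
    have e1 : (C *ᵥ z) ⬝ᵥ (B *ᵥ (C *ᵥ z)) = z ⬝ᵥ z := by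
      rw [← symm_dot hCsym z (B *ᵥ (C *ᵥ z)), Matrix.mulVec_mulVec, Matrix.mulVec_mulVec,
        hCBC, Matrix.one_mulVec]
    have e2 : (C *ᵥ z) ⬝ᵥ (B *ᵥ mv) = s ⬝ᵥ (C *ᵥ z) := by
      rw [hBm, dotProduct_comm]
    have e3 : mv ⬝ᵥ (B *ᵥ (C *ᵥ z)) = s ⬝ᵥ (C *ᵥ z) := by
      rw [symm_dot hBsym mv (C *ᵥ z), hBm]
    have e4 : mv ⬝ᵥ (B *ᵥ mv) = s ⬝ᵥ (B⁻¹ *ᵥ s) := by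
      rw [symm_dot hBsym mv mv, hBm, hmv]
    have h1 : quadForm B (C *ᵥ z + mv)
        = z ⬝ᵥ z + 2 * (s ⬝ᵥ (C *ᵥ z)) + s ⬝ᵥ (B⁻¹ *ᵥ s) := by
      unfold quadForm
      rw [Matrix.mulVec_add, dotProduct_add, add_dotProduct,
        add_dotProduct, e1, e2, e3, e4]
      ring
    have h2 : s ⬝ᵥ (C *ᵥ z + mv) = s ⬝ᵥ (C *ᵥ z) + s ⬝ᵥ (B⁻¹ *ᵥ s) := by
      rw [dotProduct_add, hmv]
    have hq : quadForm B⁻¹ s = s ⬝ᵥ (B⁻¹ *ᵥ s) := rfl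
    rw [h1, h2, hq]
    ring
  -- the 1-d and product Gaussians
  set φg : (Fin d → ℝ) → ℝ := fun z => Real.exp (-(z ⬝ᵥ z) / 2) with hφdef
  have hφeq : ∀ z : Fin d → ℝ, φg z = ∏ i, Real.exp (-(1/2) * (z i) ^ 2) := by
    intro z
    show Real.exp (-(z ⬝ᵥ z) / 2) = _
    rw [← Real.exp_sum]
    congr 1
    rw [dot_eq, ← Finset.mul_sum]
    have h2 : ∑ i, z i * z i = ∑ i, (z i) ^ 2 :=
      Finset.sum_congr rfl fun i _ => (pow_two (z i)).symm
    rw [h2]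
    ring
  have hφint : Integrable φg volume := by
    have : Integrable (fun z : Fin d → ℝ => ∏ i, Real.exp (-(1/2) * (z i) ^ 2)) volume :=
      Integrable.fintype_prod (f := fun (_ : Fin d) (y : ℝ) => Real.exp (-(1/2) * y ^ 2))
        (fun _ => integrable_exp_neg_mul_sq (by norm_num))
    exact this.congr (Filter.Eventually.of_forall fun z => (hφeq z).symm)
  have hφval : ∫ z : Fin d → ℝ, φg z = Real.sqrt (2 * π) ^ d := by
    have h1 : ∫ z : Fin d → ℝ, φg z
        = ∫ z : Fin d → ℝ, ∏ i, Real.exp (-(1/2) * (z i) ^ 2) :=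
      integral_congr_ae (Filter.Eventually.of_forall hφeq)
    rw [h1, MeasureTheory.volume_pi, MeasureTheory.integral_fintype_prod_eq_pow (ι := Fin d)
      (fun y : ℝ => Real.exp (-(1/2) * y ^ 2))]
    have : ∫ y : ℝ, Real.exp (-(1/2) * y ^ 2) = Real.sqrt (2 * π) := by
      rw [integral_gaussian]
      congr 1
      rw [div_div_eq_mul_div, div_one]
      ring
    rw [this]
    simp
  -- change of variables
  set f : (Fin d → ℝ) → ℝ := fun x => Real.exp (s ⬝ᵥ x - quadForm B x / 2) with hfdef
  have hfc : Continuous f := by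
    apply Real.continuous_exp.comp
    exact (continuous_dot s).sub ((continuous_quadForm B).div_const 2)
  set g : (Fin d → ℝ) → ℝ := fun x => f (x + mv) with hgdef
  have hgc : Continuous g := hfc.comp (continuous_id.add continuous_const)
  have hmp : MeasurePreserving (fun x : Fin d → ℝ => x + mv) volume volume :=
    measurePreserving_add_right volume mv
  set T : ((Fin d → ℝ) →ₗ[ℝ] (Fin d → ℝ)) := Matrix.toLin' C with hTdef
  have hTc : Continuous T := T.continuous_of_finiteDimensional
  have hTapp : ∀ z, T z = C *ᵥ z := fun z => rfl
  have hTdet : LinearMap.det T ≠ 0 := by rw [hTdef, LinearMap.det_toLin']; exact hdetC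
  have hmap : Measure.map T volume
      = ENNReal.ofReal |(LinearMap.det T)⁻¹| • volume :=
    Real.map_linearMap_volume_pi_eq_smul_volume_pi hTdet
  have hdetT : LinearMap.det T = C.det := by rw [hTdef, LinearMap.det_toLin']
  have hcne : ENNReal.ofReal |(LinearMap.det T)⁻¹| ≠ 0 := by
    simp only [ne_eq, ENNReal.ofReal_eq_zero, not_le, abs_pos]
    exact inv_ne_zero (by rw [hdetT]; exact hdetC)
  have hgT : ∀ z, g (T z) = Real.exp (quadForm B⁻¹ s / 2) * φg z := by
    intro z
    show Real.exp (s ⬝ᵥ (C *ᵥ z + mv) - quadForm B (C *ᵥ z + mv) / 2) = _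
    rw [key z, sub_eq_add_neg, Real.exp_add]
    congr 1
    show Real.exp (-(z ⬝ᵥ z / 2)) = Real.exp (-(z ⬝ᵥ z) / 2)
    rw [neg_div]
  have hgTint : Integrable (fun z => g (T z)) volume := by
    have h := hφint.const_mul (Real.exp (quadForm B⁻¹ s / 2))
    exact h.congr (Filter.Eventually.of_forall fun z => (hgT z).symm)
  have hgmeasmap : AEStronglyMeasurable g (Measure.map T volume) := hgc.aestronglyMeasurable
  have h1 : Integrable g (Measure.map T volume) :=
    (integrable_map_measure hgmeasmap hTc.measurable.aemeasurable).mpr hgTint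
  have hgint : Integrable g volume := by
    rw [hmap] at h1
    exact (integrable_smul_measure hcne ENNReal.ofReal_ne_top).mp h1
  have hfint : Integrable f volume :=
    (hmp.integrable_comp hfc.aestronglyMeasurable).mp hgint
  have hIgT : ∫ z, g (T z) = Real.exp (quadForm B⁻¹ s / 2) * Real.sqrt (2 * π) ^ d := by
    rw [integral_congr_ae (Filter.Eventually.of_forall hgT), MeasureTheory.integral_const_mul, hφval]
  have hmapint : ∫ y, g y ∂(Measure.map T volume) = ∫ z, g (T z) :=
    integral_map hTc.measurable.aemeasurable hgmeasmap
  have hsmul : ∫ y, g y ∂(Measure.map T volume)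
      = |(LinearMap.det T)⁻¹| * ∫ y, g y := by
    rw [hmap, integral_smul_measure, ENNReal.toReal_ofReal (abs_nonneg _)]
    rfl
  have hIg : ∫ y, g y = |C.det| * (Real.exp (quadForm B⁻¹ s / 2) * Real.sqrt (2 * π) ^ d) := by
    have h2 : |(LinearMap.det T)⁻¹| * ∫ y, g y
        = Real.exp (quadForm B⁻¹ s / 2) * Real.sqrt (2 * π) ^ d := by
      rw [← hsmul, hmapint, hIgT]
    rw [hdetT, abs_inv] at h2
    have h3 : |C.det| ≠ 0 := abs_ne_zero.mpr hdetC
    field_simp at h2 ⊢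
    linarith [h2]
  have hIf : ∫ x, f x = ∫ y, g y := by
    exact (integral_add_right_eq_self f mv).symm
  constructor
  · exact hfint
  · rw [hIf, hIg, habsdetC, Real.sqrt_inv]
    field_simp

lemma ville_aux [m : MeasurableSpace Ω] (P : Measure Ω) [IsProbabilityMeasure P]
    (F : Filtration ℕ m) (bad : ℕ → Set Ω) (hbad : ∀ t, MeasurableSet[F t] (bad t))
    (L : ℕ → Ω → ℝ) (hL : Supermartingale L F P) (hLpos : ∀ t ω, 0 ≤ L t ω)
    (hL0 : ∀ ω, L 0 ω ≤ 1) (g : ℕ → Ω → ℝ) (hgL : ∀ t, ∀ᵐ ω ∂P, g t ω ≤ L t ω) :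
    ∑' t, ∫⁻ ω in (bad t \ ⋃ (t' : ℕ) (_ : t' < t), bad t'),
      ENNReal.ofReal (g t ω) ∂P ≤ 1 := by
  classical
  set E : ℕ → Set Ω := fun t => bad t \ ⋃ (t' : ℕ) (_ : t' < t), bad t' with hEdef
  have hEmeas : ∀ t, MeasurableSet (E t) := fun t =>
    (F.le t _ (hbad t)).diff
      (MeasurableSet.biUnion (Set.to_countable _) fun t' _ => F.le t' _ (hbad t'))
  have hEdisj : ∀ ⦃t t' : ℕ⦄ (ω : Ω), t ≠ t' → ω ∈ E t → ω ∉ E t' := by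
    intro t t' ω hne ht ht'
    rcases lt_or_gt_of_ne hne with h | h
    · exact ht'.2 (Set.mem_biUnion h ht.1)
    · exact ht.2 (Set.mem_biUnion h ht'.1)
  -- the real sums
  set a : ℕ → ℝ := fun t => ∫ ω in E t, L t ω ∂P with hadef
  have ha_nonneg : ∀ t, 0 ≤ a t := fun t =>
    setIntegral_nonneg (hEmeas t) fun ω _ => hLpos t ω
  -- the real bound via optional stopping
  have real_bound : ∀ N : ℕ, ∑ t ∈ Finset.range (N + 1), a t ≤ 1 := by
    intro N
    set τ : Ω → ℕ := fun ω =>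
      if h : ∃ t, t ≤ N ∧ ω ∈ bad t then sInf {t | ω ∈ bad t} else N with hτdef
    have hτpos : ∀ ω, (∃ t, t ≤ N ∧ ω ∈ bad t) → τ ω = sInf {t | ω ∈ bad t} := by
      intro ω h
      simp only [hτdef]
      exact dif_pos h
    have hτneg : ∀ ω, ¬(∃ t, t ≤ N ∧ ω ∈ bad t) → τ ω = N := by
      intro ω h
      simp only [hτdef]
      exact dif_neg h
    have hτle : ∀ ω, τ ω ≤ N := by
      intro ω
      by_cases h : ∃ t, t ≤ N ∧ ω ∈ bad t
      · obtain ⟨t0, ht0N, ht0⟩ := h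
        rw [hτpos ω ⟨t0, ht0N, ht0⟩]
        exact (Nat.sInf_le (show t0 ∈ {t | ω ∈ bad t} from ht0)).trans ht0N
      · rw [hτneg ω h]
    have hτst : IsStoppingTime F (fun ω => (WithTop.some (τ ω) : WithTop ℕ)) := by
      intro k
      simp only [WithTop.coe_le_coe]
      by_cases hk : N ≤ k
      · have : {ω | τ ω ≤ k} = Set.univ := Set.eq_univ_of_forall fun ω =>
          (hτle ω).trans hk
        rw [this]
        exact MeasurableSet.univ
      · push_neg at hk
        have heq : {ω | τ ω ≤ k} = ⋃ (t : ℕ) (_ : t ≤ k), bad t := by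
          ext ω
          simp only [Set.mem_setOf_eq, Set.mem_iUnion]
          constructor
          · intro hτk
            by_cases h : ∃ t, t ≤ N ∧ ω ∈ bad t
            · rw [hτpos ω h] at hτk
              have hne : {t | ω ∈ bad t}.Nonempty := ⟨h.choose, h.choose_spec.2⟩
              exact ⟨sInf {t | ω ∈ bad t}, hτk, Nat.sInf_mem hne⟩
            · rw [hτneg ω h] at hτk
              exact absurd hτk (not_le.mpr hk)
          · rintro ⟨t, htk, htb⟩
            have h : ∃ t', t' ≤ N ∧ ω ∈ bad t' := ⟨t, htk.trans hk.le, htb⟩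
            rw [hτpos ω h]
            exact (Nat.sInf_le (show t ∈ {t' | ω ∈ bad t'} from htb)).trans htk
        rw [heq]
        exact MeasurableSet.biUnion (Set.to_countable _) fun t ht =>
          F.mono ht _ (hbad t)
    -- value of τ on E t
    have hτval : ∀ (t : ℕ) (ω : Ω), t ≤ N → ω ∈ E t → τ ω = t := by
      intro t ω htN hωE
      have h : ∃ t', t' ≤ N ∧ ω ∈ bad t' := ⟨t, htN, hωE.1⟩
      rw [hτpos ω h]
      have hne : {t' | ω ∈ bad t'}.Nonempty := ⟨t, hωE.1⟩
      have h1 : sInf {t' | ω ∈ bad t'} ≤ t := Nat.sInf_le hωE.1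
      rcases eq_or_lt_of_le h1 with h2 | h2
      · exact h2
      · refine absurd ?_ hωE.2
        simp only [Set.mem_iUnion]
        exact ⟨sInf {t' | ω ∈ bad t'}, h2, Nat.sInf_mem hne⟩
    -- pointwise domination by the stopped value
    have hpt : ∀ ω, ∑ t ∈ Finset.range (N + 1), (E t).indicator (L t) ω
        ≤ stoppedValue L (fun ω => (WithTop.some (τ ω) : WithTop ℕ)) ω := by
      intro ω
      by_cases hω : ∃ t ∈ Finset.range (N + 1), ω ∈ E t
      · obtain ⟨t0, ht0r, ht0⟩ := hω
        have hsum : ∑ t ∈ Finset.range (N + 1), (E t).indicator (L t) ω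
            = L t0 ω := by
          rw [Finset.sum_eq_single_of_mem t0 ht0r]
          · exact Set.indicator_of_mem ht0 _
          · intro b _ hb
            exact Set.indicator_of_notMem (hEdisj ω (Ne.symm hb) ht0) _
        rw [hsum, stoppedValue,
          hτval t0 ω (Nat.lt_succ_iff.mp (Finset.mem_range.mp ht0r)) ht0]
        exact le_rfl
      · push_neg at hω
        have hsum : ∑ t ∈ Finset.range (N + 1), (E t).indicator (L t) ω = 0 :=
          Finset.sum_eq_zero fun t ht => Set.indicator_of_notMem (hω t ht) _
        rw [hsum]
        exact hLpos _ ω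
    -- optional stopping
    have hsv_int : Integrable (stoppedValue L (fun ω => (WithTop.some (τ ω) : WithTop ℕ))) P :=
      integrable_stoppedValue ℕ hτst hL.integrable (fun ω => WithTop.coe_le_coe.mpr (hτle ω))
    have hos : ∫ ω, stoppedValue L (fun ω => (WithTop.some (τ ω) : WithTop ℕ)) ω ∂P ≤ ∫ ω, L 0 ω ∂P := by
      have h := (hL.neg).expected_stoppedValue_mono (isStoppingTime_const F 0) hτst
        (fun ω => WithTop.coe_le_coe.mpr (Nat.zero_le _)) (fun ω => WithTop.coe_le_coe.mpr (hτle ω))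
      have h1 : stoppedValue (-L) (fun _ => (WithTop.some (0 : ℕ) : WithTop ℕ)) = fun ω => -(L 0 ω) := rfl
      have h2 : stoppedValue (-L) (fun ω => (WithTop.some (τ ω) : WithTop ℕ)) = fun ω => -(stoppedValue L (fun ω => (WithTop.some (τ ω) : WithTop ℕ)) ω) := rfl
      rw [h1, h2] at h
      simp only [integral_neg, neg_le_neg_iff] at h
      exact h
    have hL0int : ∫ ω, L 0 ω ∂P ≤ 1 := by
      calc ∫ ω, L 0 ω ∂P ≤ ∫ _ω, (1 : ℝ) ∂P :=
            integral_mono (hL.integrable 0) (integrable_const 1) hL0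
        _ = 1 := by simp
    calc ∑ t ∈ Finset.range (N + 1), a t
        = ∫ ω, ∑ t ∈ Finset.range (N + 1), (E t).indicator (L t) ω ∂P := by
          rw [integral_finset_sum _ fun t _ => (hL.integrable t).indicator (hEmeas t)]
          exact Finset.sum_congr rfl fun t _ => (integral_indicator (hEmeas t)).symm
      _ ≤ ∫ ω, stoppedValue L (fun ω => (WithTop.some (τ ω) : WithTop ℕ)) ω ∂P :=
          integral_mono
            (integrable_finset_sum _ fun t _ => (hL.integrable t).indicator (hEmeas t))
            hsv_int hpt
      _ ≤ ∫ ω, L 0 ω ∂P := hos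
      _ ≤ 1 := hL0int
  -- pass to ENNReal
  have step1 : ∀ t, ∫⁻ ω in E t, ENNReal.ofReal (g t ω) ∂P ≤ ENNReal.ofReal (a t) := by
    intro t
    have h1 : ∫⁻ ω in E t, ENNReal.ofReal (g t ω) ∂P
        ≤ ∫⁻ ω in E t, ENNReal.ofReal (L t ω) ∂P :=
      lintegral_mono_ae (ae_restrict_of_ae ((hgL t).mono fun ω h =>
        ENNReal.ofReal_le_ofReal h))
    have h2 : ∫⁻ ω in E t, ENNReal.ofReal (L t ω) ∂P = ENNReal.ofReal (a t) :=
      (MeasureTheory.ofReal_integral_eq_lintegral_ofReal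
        ((hL.integrable t).restrict)
        (Filter.Eventually.of_forall fun ω => hLpos t ω)).symm
    exact h1.trans h2.le
  calc ∑' t, ∫⁻ ω in E t, ENNReal.ofReal (g t ω) ∂P
      ≤ ∑' t, ENNReal.ofReal (a t) := ENNReal.tsum_le_tsum step1
    _ ≤ 1 := by
        rw [ENNReal.tsum_eq_iSup_sum]
        refine iSup_le fun s => ?_
        have hsub : s ⊆ Finset.range ((s.sup id) + 1) := fun t ht =>
          Finset.mem_range.mpr (Nat.lt_succ_of_le (Finset.le_sup (f := id) ht))
        calc ∑ t ∈ s, ENNReal.ofReal (a t)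
            ≤ ∑ t ∈ Finset.range ((s.sup id) + 1), ENNReal.ofReal (a t) :=
              Finset.sum_le_sum_of_subset hsub
          _ = ENNReal.ofReal (∑ t ∈ Finset.range ((s.sup id) + 1), a t) :=
              (ENNReal.ofReal_sum_of_nonneg fun t _ => ha_nonneg t).symm
          _ ≤ 1 := by
              rw [show (1 : ℝ≥0∞) = ENNReal.ofReal 1 by simp]
              exact ENNReal.ofReal_le_ofReal (real_bound (s.sup id))

theorem subGaussian_self_normalized
    [m : MeasurableSpace Ω] (P : Measure Ω) [IsProbabilityMeasure P]
    (F : Filtration ℕ m)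
    (S : ℕ → Ω → Fin d → ℝ) (V : ℕ → Ω → Matrix (Fin d) (Fin d) ℝ)
    (hsub : IsSubPsi P F (Set.Ici 0) (fun lam => lam ^ 2 / 2) S V)
    (U0 : Matrix (Fin d) (Fin d) ℝ) (hU0 : U0.PosDef)
    (δ : ℝ) (hδ : δ ∈ Set.Ioo (0 : ℝ) 1) :
    ENNReal.ofReal (1 - δ) ≤
      P {ω | ∀ t, 1 ≤ t →
        (matNorm (V t ω + U0)⁻¹ (S t ω)) ^ 2 ≤
          Real.log ((V t ω + U0).det / U0.det) + 2 * Real.log (1 / δ)} := by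
  classical
  obtain ⟨hS, hV, hVpd, hsup⟩ := hsub
  obtain ⟨hδ0, hδ1⟩ := hδ
  have hApd : ∀ t ω, (V t ω + U0).PosDef := fun t ω => (hVpd t ω).add hU0
  have hU0det : 0 < U0.det := hU0.det_pos
  have hAdet : ∀ t ω, 0 < (V t ω + U0).det := fun t ω => (hApd t ω).det_pos
  have hmn : ∀ t ω, matNorm (V t ω + U0)⁻¹ (S t ω) ^ 2
      = quadForm (V t ω + U0)⁻¹ (S t ω) :=
    fun t ω => Real.sq_sqrt (quadForm_nonneg (hApd t ω).inv.posSemidef _)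
  have hSm : ∀ t, Measurable (S t) := fun t =>
    ((hS t).measurable).mono (F.le t) le_rfl
  have hVm : ∀ t, Measurable (V t) := fun t =>
    ((hV t).measurable).mono (F.le t) le_rfl
  -- the bad sets
  set bound : ℕ → Ω → ℝ := fun t ω =>
    Real.log ((V t ω + U0).det / U0.det) + 2 * Real.log (1 / δ) with hbounddef
  set bad : ℕ → Set Ω := fun t =>
    {ω | 1 ≤ t ∧ bound t ω < quadForm (V t ω + U0)⁻¹ (S t ω)} with hbaddef
  have hVU0m : ∀ t, Measurable[F t] fun ω => V t ω + U0 := by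
    intro t
    letI : MeasurableSpace Ω := F t
    exact measurable_pi_lambda _ fun i => measurable_pi_lambda _ fun j => by
      have : (fun ω => (V t ω + U0) i j) = fun ω => V t ω i j + U0 i j := rfl
      rw [this]
      exact (((measurable_pi_apply j).comp
        ((measurable_pi_apply i).comp (hV t).measurable))).add_const _
  have hbadF : ∀ t, MeasurableSet[F t] (bad t) := by
    intro t
    letI : MeasurableSpace Ω := F t
    by_cases ht : 1 ≤ t
    · have hbt : bad t = {ω | bound t ω < quadForm (V t ω + U0)⁻¹ (S t ω)} := by
        ext ω; simp [hbaddef, ht]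
      rw [hbt]
      have h1 : Measurable[F t] fun ω => bound t ω := by
        have hdet : Measurable[F t] fun ω => (V t ω + U0).det :=
          (Continuous.matrix_det continuous_id).measurable.comp (hVU0m t)
        exact (Real.measurable_log.comp (hdet.div_const _)).add_const _
      have h2 : Measurable[F t] fun ω => quadForm (V t ω + U0)⁻¹ (S t ω) :=
        measurable_quadForm_comp (measurable_matrix_inv (hVU0m t)) (hS t).measurable
      exact measurableSet_lt h1 h2
    · have hbt : bad t = ∅ := by ext ω; simp [hbaddef, ht]
      rw [hbt]; exact MeasurableSet.empty
  set E : ℕ → Set Ω := fun t => bad t \ ⋃ (t' : ℕ) (_ : t' < t), bad t' with hEdef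
  have hEm : ∀ t, MeasurableSet (E t) := fun t =>
    (F.le t _ (hbadF t)).diff
      (MeasurableSet.biUnion (Set.to_countable _) fun t' _ => F.le t' _ (hbadF t'))
  have hEsub : ∀ t, E t ⊆ bad t := fun t => Set.diff_subset
  have hEdisj' : ∀ ⦃t t' : ℕ⦄ (ω : Ω), t ≠ t' → ω ∈ E t → ω ∉ E t' := by
    intro t t' ω hne ht ht'
    rcases lt_or_gt_of_ne hne with h | h
    · refine ht'.2 ?_
      simp only [Set.mem_iUnion]
      exact ⟨t, h, ht.1⟩
    · refine ht.2 ?_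
      simp only [Set.mem_iUnion]
      exact ⟨t', h, ht'.1⟩
  -- constants and Gaussian quantities
  set c0 : ℝ := Real.sqrt (2 * π) ^ d / Real.sqrt U0.det with hc0def
  have hsqrt2pi : 0 < Real.sqrt (2 * π) := Real.sqrt_pos.mpr (by positivity)
  have hc0pos : 0 < c0 := by
    rw [hc0def]
    exact div_pos (pow_pos hsqrt2pi d) (Real.sqrt_pos.mpr hU0det)
  set w0 : (Fin d → ℝ) → ℝ := fun x => Real.exp (-(quadForm U0 x / 2)) with hw0def
  set g : (Fin d → ℝ) → ℕ → Ω → ℝ := fun x t ω =>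
    Real.exp (S t ω ⬝ᵥ x - quadForm (V t ω) x / 2) with hgdef
  set Ig : ℕ → Ω → ℝ := fun t ω =>
    ∫ x : Fin d → ℝ, Real.exp (S t ω ⬝ᵥ x - quadForm (V t ω + U0) x / 2) with hIgdef
  have hsplit : ∀ t ω (x : Fin d → ℝ),
      Real.exp (S t ω ⬝ᵥ x - quadForm (V t ω + U0) x / 2) = g x t ω * w0 x := by
    intro t ω x
    rw [hgdef, hw0def]
    show _ = Real.exp _ * Real.exp _
    rw [← Real.exp_add, quadForm_add]
    congr 1
    ring
  -- the per-x Ville bound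
  have hVille : ∀ x : Fin d → ℝ,
      ∑' t, ∫⁻ ω in E t, ENNReal.ofReal (g x t ω) ∂P ≤ 1 := by
    intro x
    by_cases hx : x = 0
    · subst hx
      have hone : ∀ t ω, g 0 t ω = 1 := by
        intro t ω
        rw [hgdef]
        simp [quadForm_zero]
      calc ∑' t, ∫⁻ ω in E t, ENNReal.ofReal (g 0 t ω) ∂P
          = ∑' t, P (E t) := by
            refine tsum_congr fun t => ?_
            rw [show (fun ω => ENNReal.ofReal (g 0 t ω)) = fun _ => (1 : ℝ≥0∞) by
              funext ω; rw [hone t ω]; simp]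
            exact setLIntegral_one (E t)
        _ = P (⋃ t, E t) := (measure_iUnion
            (fun t t' hne => Set.disjoint_left.mpr fun ω h1 h2 =>
              hEdisj' ω hne h1 h2) hEm).symm
        _ ≤ 1 := prob_le_one
    · -- unit direction
      have hxx : 0 < x ⬝ᵥ x := by
        obtain ⟨i, hi⟩ := Function.ne_iff.mp hx
        rw [dot_eq]
        exact Finset.sum_pos' (fun j _ => mul_self_nonneg _)
          ⟨i, Finset.mem_univ i, mul_self_pos.mpr hi⟩
      set lam : ℝ := Real.sqrt (x ⬝ᵥ x) with hlamdef
      have hlampos : 0 < lam := Real.sqrt_pos.mpr hxx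
      have hlamsq : lam ^ 2 = x ⬝ᵥ x := Real.sq_sqrt hxx.le
      set θ : Fin d → ℝ := lam⁻¹ • x with hθdef
      have hθunit : θ ⬝ᵥ θ = 1 := by
        rw [hθdef, smul_dotProduct, dotProduct_smul]
        rw [smul_eq_mul, smul_eq_mul, ← mul_assoc, ← hlamsq]
        field_simp
      obtain ⟨L, hLsm, hLpos, hL0, hdom⟩ := hsup θ hθunit lam (Real.sqrt_nonneg _)
      have hdomg : ∀ t, ∀ᵐ ω ∂P, g x t ω ≤ L t ω := by
        intro t
        filter_upwards [hdom t] with ω hω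
        have heq : lam * (θ ⬝ᵥ S t ω) - lam ^ 2 / 2 * quadForm (V t ω) θ
            = S t ω ⬝ᵥ x - quadForm (V t ω) x / 2 := by
          have h1 : θ ⬝ᵥ S t ω = lam⁻¹ * (x ⬝ᵥ S t ω) := by
            rw [hθdef, smul_dotProduct, smul_eq_mul]
          have h2 : quadForm (V t ω) θ = lam⁻¹ * (lam⁻¹ * quadForm (V t ω) x) := by
            rw [hθdef]
            unfold quadForm
            rw [Matrix.mulVec_smul, smul_dotProduct, dotProduct_smul]
            simp [smul_eq_mul, mul_assoc]
          rw [h1, h2, dotProduct_comm x (S t ω)]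
          field_simp
        rw [hgdef]
        show Real.exp _ ≤ L t ω
        rw [← heq]
        exact hω
      have hvb := ville_aux P F bad hbadF L hLsm hLpos hL0
        (fun t ω => g x t ω) hdomg
      exact hvb
  -- measurability of the product integrand
  have hΨm : ∀ t, Measurable fun p : Ω × (Fin d → ℝ) =>
      ENNReal.ofReal (g p.2 t p.1 * w0 p.2) := by
    intro t
    refine ENNReal.measurable_ofReal.comp (Measurable.mul ?_ ?_)
    · rw [hgdef]
      refine Real.measurable_exp.comp (Measurable.sub ?_ ?_)
      · exact measurable_dot_comp ((hSm t).comp measurable_fst) measurable_snd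
      · exact (measurable_quadForm_comp ((hVm t).comp measurable_fst)
          measurable_snd).div_const 2
    · rw [hw0def]
      exact (Real.measurable_exp.comp
        ((measurable_quadForm_comp measurable_const measurable_id).div_const 2).neg).comp
        measurable_snd
  -- the key per-ω inequality on bad t
  have key1 : ∀ t ω, ω ∈ bad t → 1 ≤ δ / c0 * Ig t ω := by
    intro t ω hω
    have hq := hω.2
    have hIg : Ig t ω = Real.sqrt (2 * π) ^ d / Real.sqrt (V t ω + U0).det *
        Real.exp (quadForm (V t ω + U0)⁻¹ (S t ω) / 2) :=
      (gauss_key (V t ω + U0) (hApd t ω) (S t ω)).2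
    have hre : δ / c0 * Ig t ω = δ * (Real.sqrt U0.det / Real.sqrt (V t ω + U0).det) *
        Real.exp (quadForm (V t ω + U0)⁻¹ (S t ω) / 2) := by
      rw [hIg, hc0def]
      have h1 : Real.sqrt (2 * π) ^ d ≠ 0 := ne_of_gt (pow_pos hsqrt2pi d)
      have h2 : Real.sqrt U0.det ≠ 0 := ne_of_gt (Real.sqrt_pos.mpr hU0det)
      have h3 : Real.sqrt (V t ω + U0).det ≠ 0 :=
        ne_of_gt (Real.sqrt_pos.mpr (hAdet t ω))
      field_simp
    rw [hre]
    exact onebound (hAdet t ω) hU0det hδ0 hq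
  -- the main measure bound
  have hPbad : P (⋃ t, bad t) ≤ ENNReal.ofReal δ := by
    have hsubU : (⋃ t, bad t) ⊆ ⋃ t, E t := by
      intro ω hω
      rw [Set.mem_iUnion] at hω ⊢
      obtain ⟨t, ht⟩ := hω
      have hex : ∃ t, ω ∈ bad t := ⟨t, ht⟩
      refine ⟨Nat.find hex, Nat.find_spec hex, ?_⟩
      intro hc
      simp only [Set.mem_iUnion] at hc
      obtain ⟨t', ht', hb⟩ := hc
      exact Nat.find_min hex ht' hb
    have step1 : ∀ t, P (E t) ≤ ENNReal.ofReal (δ / c0) *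
        ∫⁻ ω in E t, ENNReal.ofReal (Ig t ω) ∂P := by
      intro t
      have h1 : P (E t) = ∫⁻ ω in E t, 1 ∂P := (setLIntegral_one (E t)).symm
      have h2 : ∫⁻ ω in E t, 1 ∂P ≤ ∫⁻ ω in E t, ENNReal.ofReal (δ / c0 * Ig t ω) ∂P := by
        refine lintegral_mono_ae ((ae_restrict_iff' (hEm t)).mpr
          (Filter.Eventually.of_forall fun ω hω => ?_))
        exact ENNReal.one_le_ofReal.mpr (key1 t ω (hEsub t hω))
      have h3 : ∫⁻ ω in E t, ENNReal.ofReal (δ / c0 * Ig t ω) ∂P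
          = ENNReal.ofReal (δ / c0) * ∫⁻ ω in E t, ENNReal.ofReal (Ig t ω) ∂P := by
        rw [← lintegral_const_mul' _ _ ENNReal.ofReal_ne_top]
        refine lintegral_congr fun ω => ?_
        rw [← ENNReal.ofReal_mul (by positivity)]
      rw [h1]
      exact h2.trans h3.le
    have step2 : ∀ t, ∫⁻ ω in E t, ENNReal.ofReal (Ig t ω) ∂P
        = ∫⁻ x : Fin d → ℝ, (∫⁻ ω in E t, ENNReal.ofReal (g x t ω * w0 x) ∂P) ∂volume := by
      intro t
      have h1 : ∀ ω, ENNReal.ofReal (Ig t ω)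
          = ∫⁻ x : Fin d → ℝ, ENNReal.ofReal (g x t ω * w0 x) ∂volume := by
        intro ω
        have hint := (gauss_key (V t ω + U0) (hApd t ω) (S t ω)).1
        rw [hIgdef]
        show ENNReal.ofReal (∫ x : Fin d → ℝ,
          Real.exp (S t ω ⬝ᵥ x - quadForm (V t ω + U0) x / 2)) = _
        rw [MeasureTheory.ofReal_integral_eq_lintegral_ofReal hint
          (Filter.Eventually.of_forall fun x => Real.exp_nonneg _)]
        refine lintegral_congr fun x => ?_
        rw [hsplit t ω x]
      have h2 : ∫⁻ ω in E t, ENNReal.ofReal (Ig t ω) ∂P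
          = ∫⁻ ω in E t, ∫⁻ x : Fin d → ℝ,
              ENNReal.ofReal (g x t ω * w0 x) ∂volume ∂P :=
        lintegral_congr fun ω => h1 ω
      rw [h2]
      have hswap := lintegral_lintegral_swap
        (μ := P.restrict (E t)) (ν := (volume : Measure (Fin d → ℝ)))
        (f := fun ω x => ENNReal.ofReal (g x t ω * w0 x)) (hΨm t).aemeasurable
      rw [hswap]
    have step3 : ∫⁻ x : Fin d → ℝ, ENNReal.ofReal (w0 x) ∂volume
        = ENNReal.ofReal c0 := by
      have hg0 := gauss_key U0 hU0 0
      have heq : (fun x : Fin d → ℝ => Real.exp ((0 : Fin d → ℝ) ⬝ᵥ x - quadForm U0 x / 2))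
          = w0 := by
        funext x
        rw [hw0def]
        congr 1
        rw [zero_dotProduct]
        ring
      have hval : ∫ x : Fin d → ℝ, w0 x = c0 := by
        rw [← heq, hg0.2, quadForm_zero]
        simp [hc0def]
      have hint : Integrable w0 (volume : Measure (Fin d → ℝ)) := heq ▸ hg0.1
      rw [← MeasureTheory.ofReal_integral_eq_lintegral_ofReal hint
        (Filter.Eventually.of_forall fun x => Real.exp_nonneg _), hval]
    -- assemble
    have hmeas_inner : ∀ t, AEMeasurable (fun x : Fin d → ℝ =>
        ∫⁻ ω in E t, ENNReal.ofReal (g x t ω * w0 x) ∂P) volume := fun t =>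
      ((hΨm t).lintegral_prod_left' (μ := P.restrict (E t))).aemeasurable
    have hfactor : ∀ t (x : Fin d → ℝ),
        ∫⁻ ω in E t, ENNReal.ofReal (g x t ω * w0 x) ∂P
          = (∫⁻ ω in E t, ENNReal.ofReal (g x t ω) ∂P) * ENNReal.ofReal (w0 x) := by
      intro t x
      rw [← lintegral_mul_const' _ _ ENNReal.ofReal_ne_top]
      refine lintegral_congr fun ω => ?_
      rw [← ENNReal.ofReal_mul (Real.exp_nonneg _)]
    calc P (⋃ t, bad t) ≤ P (⋃ t, E t) := measure_mono hsubU
      _ ≤ ∑' t, P (E t) := measure_iUnion_le E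
      _ ≤ ∑' t, ENNReal.ofReal (δ / c0) *
            ∫⁻ x : Fin d → ℝ, (∫⁻ ω in E t, ENNReal.ofReal (g x t ω * w0 x) ∂P) ∂volume := by
          refine ENNReal.tsum_le_tsum fun t => ?_
          exact (step1 t).trans (by rw [step2 t])
      _ = ENNReal.ofReal (δ / c0) * ∑' t,
            ∫⁻ x : Fin d → ℝ, (∫⁻ ω in E t, ENNReal.ofReal (g x t ω * w0 x) ∂P) ∂volume :=
          ENNReal.tsum_mul_left
      _ = ENNReal.ofReal (δ / c0) * ∫⁻ x : Fin d → ℝ,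
            ∑' t, (∫⁻ ω in E t, ENNReal.ofReal (g x t ω * w0 x) ∂P) ∂volume := by
          rw [← lintegral_tsum hmeas_inner]
      _ ≤ ENNReal.ofReal (δ / c0) * ∫⁻ x : Fin d → ℝ,
            ENNReal.ofReal (w0 x) ∂volume := by
          refine mul_le_mul_right (lintegral_mono fun x => ?_) _
          have hfx : ∀ t, ∫⁻ ω in E t, ENNReal.ofReal (g x t ω * w0 x) ∂P
              = (∫⁻ ω in E t, ENNReal.ofReal (g x t ω) ∂P) * ENNReal.ofReal (w0 x) :=
            fun t => hfactor t x
          calc ∑' t, ∫⁻ ω in E t, ENNReal.ofReal (g x t ω * w0 x) ∂P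
              = (∑' t, ∫⁻ ω in E t, ENNReal.ofReal (g x t ω) ∂P) * ENNReal.ofReal (w0 x) := by
                rw [← ENNReal.tsum_mul_right]
                exact tsum_congr hfx
            _ ≤ 1 * ENNReal.ofReal (w0 x) := mul_le_mul_left (hVille x) _
            _ = ENNReal.ofReal (w0 x) := one_mul _
      _ = ENNReal.ofReal (δ / c0) * ENNReal.ofReal c0 := by rw [step3]
      _ = ENNReal.ofReal δ := by
          rw [← ENNReal.ofReal_mul (by positivity)]
          congr 1
          field_simp
  -- conclude
  have hGc : {ω | ∀ t, 1 ≤ t → matNorm (V t ω + U0)⁻¹ (S t ω) ^ 2 ≤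
      Real.log ((V t ω + U0).det / U0.det) + 2 * Real.log (1 / δ)}ᶜ = ⋃ t, bad t := by
    ext ω
    simp only [Set.mem_compl_iff, Set.mem_setOf_eq, Set.mem_iUnion, not_forall]
    constructor
    · intro hcon
      push_neg at hcon
      obtain ⟨t, ht, hlt⟩ := hcon
      exact ⟨t, ht, by rw [← hmn t ω]; exact hlt⟩
    · rintro ⟨t, ht, hlt⟩
      push_neg
      exact ⟨t, ht, by rw [hmn t ω]; exact hlt⟩
  have hGm : MeasurableSet (⋃ t, bad t) :=
    MeasurableSet.iUnion fun t => F.le t _ (hbadF t)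
  have hGeq : {ω | ∀ t, 1 ≤ t → matNorm (V t ω + U0)⁻¹ (S t ω) ^ 2 ≤
      Real.log ((V t ω + U0).det / U0.det) + 2 * Real.log (1 / δ)}
        = (⋃ t, bad t)ᶜ := by
    rw [← hGc, compl_compl]
  rw [hGeq, prob_compl_eq_one_sub hGm]
  calc ENNReal.ofReal (1 - δ) = 1 - ENNReal.ofReal δ := by
        rw [ENNReal.ofReal_sub _ hδ0.le, ENNReal.ofReal_one]
    _ ≤ 1 - P (⋃ t, bad t) := tsub_le_tsub_left hPbad 1

end
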